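/- arXiv:1410.4154 — 3 statements merged into one kernel-verified Lean document; each statement's English description precedes it below -/
import Mathlib

section
/- In the game G₂, every Nash equilibrium σ satisfies E_leader(σ) = 0; indeed, the outcome play of every Nash equilibrium is the play that loops at vertex 1 forever. -/
open scoped BigOperators

/-- A multi-player discounted sum game (MDSG) on sets of players `P`,
vertices `V` and actions `A`, all required to be finite (`A` nonempty).
The `owner` of a vertex chooses the action there; `tr` is the transition
function, `rew p v a` is the reward of player `p` for taking action `a`
at vertex `v`, `init` is the initial probability distribution on the
vertices, and `disc` is the discount factor. -/
structure MDSG (P V A : Type) : Type where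
  fin_P : Finite P
  fin_V : Finite V
  fin_A : Finite A
  nonempty_A : Nonempty A
  owner : V → P
  tr : V → A → V
  rew : P → V → A → ℝ
  init : V → ℝ
  init_nonneg : ∀ v, 0 ≤ init v
  init_sum : ∑' v, init v = 1
  disc : ℝ
  disc_pos : 0 < disc
  disc_lt_one : disc < 1

/-- A pure strategy profile: given the history (the list of vertex/action pairs
seen so far) and the current vertex, the owner of the current vertex chooses
an action.  The strategy of an individual player `p` is the restriction of the
profile to the vertices owned by `p`. -/
abbrev Profile (V A : Type) : Type := List (V × A) → V → A

namespace MDSG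

variable {P V A : Type}

/-- The pair (history, current vertex) after `n` steps of the play of `σ` from `v`. -/
def histState (G : MDSG P V A) (σ : Profile V A) (v : V) : ℕ → List (V × A) × V
  | 0 => ([], v)
  | n + 1 =>
    let s := G.histState σ v n
    (s.1 ++ [(s.2, σ s.1 s.2)], G.tr s.2 (σ s.1 s.2))

/-- The vertex visited at step `n` of the play of `σ` from `v`. -/
def playV (G : MDSG P V A) (σ : Profile V A) (v : V) (n : ℕ) : V :=
  (G.histState σ v n).2

/-- The action taken at step `n` of the play of `σ` from `v`. -/
def playA (G : MDSG P V A) (σ : Profile V A) (v : V) (n : ℕ) : A :=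
  σ (G.histState σ v n).1 (G.playV σ v n)

/-- The discounted reward of player `p` on the play of `σ` from `v`. -/
noncomputable def reward (G : MDSG P V A) (p : P) (σ : Profile V A) (v : V) : ℝ :=
  ∑' i : ℕ, G.rew p (G.playV σ v i) (G.playA σ v i) * G.disc ^ i

/-- The expected reward of player `p` under the strategy profile `σ`. -/
noncomputable def ER (G : MDSG P V A) (p : P) (σ : Profile V A) : ℝ :=
  ∑' v : V, G.init v * G.reward p σ v

/-- `σ'` differs from `σ` at most in the strategy of player `p`. -/
def DiffOnly (G : MDSG P V A) (σ σ' : Profile V A) (p : P) : Prop :=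
  ∀ h v, G.owner v ≠ p → σ' h v = σ h v

/-- Nash equilibrium: no player can profit from a unilateral deviation. -/
def IsNash (G : MDSG P V A) (σ : Profile V A) : Prop :=
  ∀ p σ', G.DiffOnly σ σ' p → G.ER p σ' ≤ G.ER p σ

/-- Leader strategy profile: no player other than the leader `l` can profit
from a unilateral deviation. -/
def IsLeaderSP (G : MDSG P V A) (l : P) (σ : Profile V A) : Prop :=
  ∀ p, p ≠ l → ∀ σ', G.DiffOnly σ σ' p → G.ER p σ' ≤ G.ER p σ

/-- `σ` is a (pure) strategy profile with memory bound `b`: there is a memory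
set `M` with `|M| ≤ b`, an initial memory state, a memory update function and
a usage function producing all the actions of `σ`. -/
def MemBound (G : MDSG P V A) (σ : Profile V A) (b : ℕ) : Prop :=
  ∃ n : ℕ, n ≤ b ∧ ∃ (m₀ : Fin n) (μ : Fin n → V × A → Fin n) (u : Fin n → V → A),
    ∀ h v, σ h v = u (h.foldl μ m₀) v

/-- `σ` is memoryless (positional): actions depend only on the current vertex. -/
def Positional (G : MDSG P V A) (σ : Profile V A) : Prop :=
  ∀ h h' v, σ h v = σ h' v

open Classical in
/-- Combination of a strategy for player `p` with a joint strategy of the other players. -/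
noncomputable def combine (G : MDSG P V A) (p : P) (τp τo : Profile V A) : Profile V A :=
  fun h v => if G.owner v = p then τp h v else τo h v

/-- The lower value of player `p` at vertex `v`: the supremum over the pure
strategies of `p` of the infimum over the joint pure strategies of the other
players of the reward of `p` on the resulting play from `v`. -/
noncomputable def lowerValue (G : MDSG P V A) (p : P) (v : V) : ℝ :=
  ⨆ τp : Profile V A, ⨅ τo : Profile V A, G.reward p (G.combine p τp τo) v

/-- The upper value of player `p` at vertex `v`. -/
noncomputable def upperValue (G : MDSG P V A) (p : P) (v : V) : ℝ :=
  ⨅ τo : Profile V A, ⨆ τp : Profile V A, G.reward p (G.combine p τp τo) v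

/-- The history `h` contains a deviation from `σ` at position `i`. -/
def DeviatesAt (G : MDSG P V A) (σ : Profile V A) (h : List (V × A)) (i : ℕ) : Prop :=
  ∃ hi : i < h.length, (h.get ⟨i, hi⟩).2 ≠ σ (h.take i) (h.get ⟨i, hi⟩).1

/-- Reward-and-punish profile: on every history that deviates from the
prescribed actions, every action depends only on the current vertex and on the
identity of the first player who deviated (all players follow a fixed
positional strategy depending only on the first deviator). -/
def IsRewardPunish (G : MDSG P V A) (σ : Profile V A) : Prop :=
  ∃ punish : P → V → A, ∀ (h : List (V × A)) (i : ℕ) (hi : i < h.length),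
    G.DeviatesAt σ h i → (∀ j, j < i → ¬ G.DeviatesAt σ h j) →
    ∀ v, σ h v = punish (G.owner (h.get ⟨i, hi⟩).1) v

/-- The outcome plays of `σ` are generated with compliance memory bound `b`:
on every history on which all players have complied, the actions of `σ` are
produced by a memory structure with at most `b` states. -/
def ComplianceMemBound (G : MDSG P V A) (σ : Profile V A) (b : ℕ) : Prop :=
  ∃ n : ℕ, n ≤ b ∧ ∃ (m₀ : Fin n) (μ : Fin n → V × A → Fin n) (u : Fin n → V → A),
    ∀ h : List (V × A), (∀ i, ¬ G.DeviatesAt σ h i) →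
      ∀ v, σ h v = u (h.foldl μ m₀) v

/-- The set of stationary mixed decision vectors: an assignment of a
probability distribution over the actions to every vertex. -/
def simplexD (V A : Type) : Set (V → A → ℝ) :=
  {d | ∀ v, (∀ a, 0 ≤ d v a) ∧ ∑' a, d v a = 1}

end MDSG
namespace MDSG

/-- The game `G₂` (Figure 3 of the paper): three players `0, 1, 2`
(representing players 1, 2, 3, where player `1` — i.e. player 2 — is the
leader), three vertices `0, 1, 2` (representing vertices 1, 2, 3, vertex `i`
owned by player `i`), actions `Bool` (`true` = "go", `false` = "stay").
Vertex `0`: "stay" loops at `0` with rewards `(0,0,0)`, "go" moves to `1`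
with rewards `(0,0,0)`.  Vertex `1`: "stay" loops at `1` with rewards
`(1,1,-2)`, "go" moves to `2` with rewards `(-3,3,0)`.  Vertex `2`: both
actions loop at `2` with rewards `(-3,3,0)`.  The initial distribution is the
point mass at vertex `0`, and the discount factor is `1/2`. -/
noncomputable def G2 : MDSG (Fin 3) (Fin 3) Bool where
  fin_P := inferInstance
  fin_V := inferInstance
  fin_A := inferInstance
  nonempty_A := inferInstance
  owner := fun v => v
  tr := fun v a =>
    if v = 0 then (if a then 1 else 0)
    else if v = 1 then (if a then 2 else 1)
    else 2
  rew := fun p v a =>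
    if v = 0 then 0
    else if v = 1 then
      (if a then (if p = 0 then -3 else if p = 1 then 3 else 0)
       else (if p = 0 then 1 else if p = 1 then 1 else -2))
    else (if p = 0 then -3 else if p = 1 then 3 else 0)
  init := fun v => if v = 0 then 1 else 0
  init_nonneg := by intro v; split <;> norm_num
  init_sum := by simpa using tsum_ite_eq (0 : Fin 3) (1 : ℝ)
  disc := 1 / 2
  disc_pos := by norm_num
  disc_lt_one := by norm_num

end MDSG

open MDSG

section Aux

private lemma summable_bound (f : ℕ → ℝ) (C : ℝ) (h : ∀ i, |f i| ≤ C * (1/2)^i) :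
    Summable f :=
  Summable.of_abs (Summable.of_nonneg_of_le (fun i => abs_nonneg _) h
    (summable_geometric_two.mul_left C))

private lemma summable_ite (t : ℕ) (c : ℝ) :
    Summable (fun i : ℕ => (if t ≤ i then c else 0) * (1/2:ℝ)^i) := by
  apply summable_bound _ |c|
  intro i
  rw [abs_mul, abs_pow, abs_of_nonneg (by norm_num : (0:ℝ) ≤ 1/2)]
  have hle : |if t ≤ i then c else 0| ≤ |c| := by split <;> simp
  exact mul_le_mul_of_nonneg_right hle (by positivity)

private lemma tsum_tail (t : ℕ) (c : ℝ) :
    ∑' i : ℕ, (if t ≤ i then c else 0) * (1/2:ℝ)^i = c * (1/2)^t * 2 := by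
  have hs := summable_ite t c
  have h2 := Summable.sum_add_tsum_nat_add t hs
  have h0 : ∑ i ∈ Finset.range t, (if t ≤ i then c else 0) * (1/2:ℝ)^i = 0 := by
    apply Finset.sum_eq_zero
    intro i hi
    rw [Finset.mem_range] at hi
    rw [if_neg (by omega)]
    ring
  have h1 : (∑' i : ℕ, (if t ≤ i + t then c else 0) * (1/2:ℝ)^(i+t)) = c * (1/2)^t * 2 := by
    have he : ∀ i : ℕ, (if t ≤ i + t then c else 0) * (1/2:ℝ)^(i+t)
        = (c * (1/2)^t) * (1/2)^i := by
      intro i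
      rw [if_pos (by omega), pow_add]
      ring
    rw [tsum_congr he, tsum_mul_left, tsum_geometric_two]
  rw [h0, h1, zero_add] at h2
  exact h2.symm

/-- Expected reward in `G2` equals the reward from vertex `0`. -/
private lemma G2_ER (p : Fin 3) (σ : Profile (Fin 3) Bool) :
    G2.ER p σ = G2.reward p σ 0 := by
  rw [MDSG.ER, tsum_fintype, Fin.sum_univ_three]
  have h0 : G2.init 0 = 1 := rfl
  have h1 : G2.init 1 = 0 := rfl
  have h2 : G2.init 2 = 0 := rfl
  rw [h0, h1, h2]
  ring

/-- Once at vertex 2, the play stays at vertex 2. -/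
private lemma play_two (σ : Profile (Fin 3) Bool) (n : ℕ) (h : G2.playV σ 0 n = 2) :
    ∀ i, G2.playV σ 0 (n + i) = 2 := by
  intro i
  induction i with
  | zero => simpa using h
  | succ m ih =>
    have : G2.playV σ 0 (n + m + 1) = G2.tr (G2.playV σ 0 (n+m)) (G2.playA σ 0 (n+m)) := rfl
    rw [← Nat.add_assoc, this, ih]
    rfl

/-- The deviation of player 1 that always plays "go" at vertex 1. -/
private def dev1 (σ : Profile (Fin 3) Bool) : Profile (Fin 3) Bool :=
  fun h v => if v = 1 then true else σ h v

/-- The deviation of player 0 that always plays "stay" at vertex 0. -/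
private def dev0 (σ : Profile (Fin 3) Bool) : Profile (Fin 3) Bool :=
  fun h v => if v = 0 then false else σ h v

private lemma dev1_hist (σ : Profile (Fin 3) Bool) (t : ℕ)
    (hlt : ∀ i < t, G2.playV σ 0 i = 0) :
    ∀ n ≤ t, G2.histState (dev1 σ) 0 n = G2.histState σ 0 n := by
  intro n hn
  induction n with
  | zero => rfl
  | succ m ih =>
    have ihm := ih (Nat.le_of_succ_le hn)
    have hv : (G2.histState σ 0 m).2 = 0 := hlt m (Nat.lt_of_succ_le hn)
    have ha : dev1 σ (G2.histState σ 0 m).1 (G2.histState σ 0 m).2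
        = σ (G2.histState σ 0 m).1 (G2.histState σ 0 m).2 := by
      rw [hv]; simp [dev1]
    simp only [MDSG.histState]
    rw [ihm, ha]

private lemma dev0_play (σ : Profile (Fin 3) Bool) :
    ∀ n, G2.playV (dev0 σ) 0 n = 0 := by
  intro n
  induction n with
  | zero => rfl
  | succ m ih =>
    have : G2.playV (dev0 σ) 0 (m + 1)
        = G2.tr (G2.playV (dev0 σ) 0 m) (G2.playA (dev0 σ) 0 m) := rfl
    rw [this, ih]
    have : G2.playA (dev0 σ) 0 m = dev0 σ (G2.histState (dev0 σ) 0 m).1 (G2.playV (dev0 σ) 0 m) := rfl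
    rw [this, ih]
    simp [dev0]
    rfl

end Aux

open MDSG

section Aux2

private lemma G2_rew1_le (v : Fin 3) (a : Bool) : G2.rew 1 v a ≤ 3 := by
  fin_cases v <;> cases a <;>
    first
      | exact (by norm_num : (0:ℝ) ≤ 3)
      | exact (by norm_num : (1:ℝ) ≤ 3)
      | exact (by norm_num : (3:ℝ) ≤ 3)

private lemma G2_rew_abs (p v : Fin 3) (a : Bool) : |G2.rew p v a| ≤ 3 := by
  fin_cases p <;> fin_cases v <;> cases a <;>
    first
      | exact (by norm_num : |(0:ℝ)| ≤ 3)
      | exact (by norm_num : |(1:ℝ)| ≤ 3)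
      | exact (by norm_num : |(3:ℝ)| ≤ 3)
      | exact (by norm_num : |(-3:ℝ)| ≤ 3)
      | exact (by norm_num : |(-2:ℝ)| ≤ 3)

private lemma summable_rew (p : Fin 3) (σ : Profile (Fin 3) Bool) :
    Summable (fun i : ℕ => G2.rew p (G2.playV σ 0 i) (G2.playA σ 0 i) * (1/2:ℝ)^i) := by
  apply summable_bound _ 3
  intro i
  rw [abs_mul, abs_pow, abs_of_nonneg (by norm_num : (0:ℝ) ≤ 1/2)]
  exact mul_le_mul_of_nonneg_right (G2_rew_abs _ _ _) (by positivity)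

end Aux2


open MDSG in
/-- In the game `G₂`, every Nash equilibrium `σ` gives the leader (player `1`,
i.e. player 2 of the paper) expected reward `0`; indeed, the outcome play of
every Nash equilibrium loops at vertex `0` (vertex 1 of the paper) forever. -/
theorem every_Nash_of_G2_gives_leader_zero (σ : Profile (Fin 3) Bool)
    (hσ : G2.IsNash σ) :
    G2.ER 1 σ = 0 ∧ ∀ n : ℕ, G2.playV σ 0 n = 0 := by
  classical
  have hd : G2.disc = (1/2:ℝ) := rfl
  have key : ∀ n : ℕ, G2.playV σ 0 n = 0 := by
    by_contra hc
    push_neg at hc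
    have hex : ∃ n, G2.playV σ 0 n ≠ 0 := hc
    set t := Nat.find hex with htdef
    have htne : G2.playV σ 0 t ≠ 0 := Nat.find_spec hex
    have hlt : ∀ i < t, G2.playV σ 0 i = 0 := by
      intro i hi
      by_contra h
      exact Nat.find_min hex hi h
    have ht0 : t ≠ 0 := by
      intro h
      apply htne
      rw [h]
      rfl
    obtain ⟨s, hs⟩ := Nat.exists_eq_succ_of_ne_zero ht0
    have hps : G2.playV σ 0 s = 0 := hlt s (by omega)
    have hstep : G2.playV σ 0 (s+1) = G2.tr (G2.playV σ 0 s) (G2.playA σ 0 s) := rfl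
    have h1 : G2.playV σ 0 t = 1 := by
      rw [hs, hstep, hps] at htne ⊢
      cases hA : G2.playA σ 0 s
      · rw [hA] at htne
        exact absurd rfl htne
      · rfl
    -- player 1's deviation
    have hdiff1 : G2.DiffOnly σ (dev1 σ) 1 := by
      intro h v hv
      have hv' : v ≠ 1 := hv
      simp [dev1, hv']
    have hhist := dev1_hist σ t hlt
    have hpv : ∀ i ≤ t, G2.playV (dev1 σ) 0 i = G2.playV σ 0 i := by
      intro i hi
      show (G2.histState (dev1 σ) 0 i).2 = (G2.histState σ 0 i).2
      rw [hhist i hi]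
    have hpt : G2.playV (dev1 σ) 0 t = 1 := by rw [hpv t le_rfl, h1]
    have hat : G2.playA (dev1 σ) 0 t = true := by
      show dev1 σ (G2.histState (dev1 σ) 0 t).1 (G2.playV (dev1 σ) 0 t) = true
      rw [hpt]
      simp [dev1]
    have hp2 : G2.playV (dev1 σ) 0 (t+1) = 2 := by
      have hq : G2.playV (dev1 σ) 0 (t+1)
          = G2.tr (G2.playV (dev1 σ) 0 t) (G2.playA (dev1 σ) 0 t) := rfl
      rw [hq, hpt, hat]
      rfl
    have hp2' : ∀ i, t+1 ≤ i → G2.playV (dev1 σ) 0 i = 2 := by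
      intro i hi
      obtain ⟨k, hk⟩ := Nat.exists_eq_add_of_le hi
      rw [hk]
      exact play_two _ _ hp2 k
    -- reward of player 1 under the deviation
    have hrewdev : G2.reward 1 (dev1 σ) 0 = 3 * (1/2)^t * 2 := by
      rw [MDSG.reward]
      have he : ∀ i : ℕ, G2.rew 1 (G2.playV (dev1 σ) 0 i) (G2.playA (dev1 σ) 0 i) * G2.disc ^ i
          = (if t ≤ i then (3:ℝ) else 0) * (1/2)^i := by
        intro i
        rw [hd]
        rcases lt_trichotomy i t with h | h | h
        · rw [hpv i (le_of_lt h), hlt i h, if_neg (by omega)]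
          rw [show G2.rew 1 0 (G2.playA (dev1 σ) 0 i) = 0 from rfl]
        · subst h
          rw [hpt, hat, if_pos le_rfl]
          rw [show G2.rew 1 1 true = 3 from rfl]
        · rw [hp2' i (by omega), if_pos (by omega)]
          rw [show G2.rew 1 2 (G2.playA (dev1 σ) 0 i) = 3 by cases G2.playA (dev1 σ) 0 i <;> rfl]
      rw [tsum_congr he, tsum_tail]
    have hge : 3 * (1/2:ℝ)^t * 2 ≤ G2.reward 1 σ 0 := by
      have := hσ 1 (dev1 σ) hdiff1
      rw [G2_ER, G2_ER, hrewdev] at this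
      exact this
    -- upper bound forces the action at time t to be `true`
    have hAt : G2.playA σ 0 t = true := by
      by_contra hA
      rw [Bool.not_eq_true] at hA
      have hfg : ∀ i : ℕ, G2.rew 1 (G2.playV σ 0 i) (G2.playA σ 0 i) * (1/2:ℝ)^i
          ≤ (if t ≤ i then (3:ℝ) else 0) * (1/2)^i := by
        intro i
        by_cases h : t ≤ i
        · rw [if_pos h]
          exact mul_le_mul_of_nonneg_right (G2_rew1_le _ _) (by positivity)
        · rw [if_neg h, hlt i (by omega)]
          rw [show G2.rew 1 0 (G2.playA σ 0 i) = 0 from rfl]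
      have hft : G2.rew 1 (G2.playV σ 0 t) (G2.playA σ 0 t) * (1/2:ℝ)^t
          < (if t ≤ t then (3:ℝ) else 0) * (1/2)^t := by
        rw [h1, hA, if_pos le_rfl, show G2.rew 1 1 false = 1 from rfl]
        have : (0:ℝ) < (1/2)^t := by positivity
        nlinarith
      have hlt' := Summable.tsum_lt_tsum hfg hft (summable_rew 1 σ) (summable_ite t 3)
      rw [tsum_tail] at hlt'
      have hr : G2.reward 1 σ 0
          = ∑' i : ℕ, G2.rew 1 (G2.playV σ 0 i) (G2.playA σ 0 i) * (1/2:ℝ)^i := rfl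
      rw [hr] at hge
      linarith
    -- hence the play moves to vertex 2 and player 0 suffers
    have hq2 : G2.playV σ 0 (t+1) = 2 := by
      have hq : G2.playV σ 0 (t+1) = G2.tr (G2.playV σ 0 t) (G2.playA σ 0 t) := rfl
      rw [hq, h1, hAt]
      rfl
    have hq2' : ∀ i, t+1 ≤ i → G2.playV σ 0 i = 2 := by
      intro i hi
      obtain ⟨k, hk⟩ := Nat.exists_eq_add_of_le hi
      rw [hk]
      exact play_two _ _ hq2 k
    have hrew0 : G2.reward 0 σ 0 = (-3) * (1/2)^t * 2 := by
      rw [MDSG.reward]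
      have he : ∀ i : ℕ, G2.rew 0 (G2.playV σ 0 i) (G2.playA σ 0 i) * G2.disc ^ i
          = (if t ≤ i then (-3:ℝ) else 0) * (1/2)^i := by
        intro i
        rw [hd]
        rcases lt_trichotomy i t with h | h | h
        · rw [hlt i h, if_neg (by omega)]
          rw [show G2.rew 0 0 (G2.playA σ 0 i) = 0 from rfl]
        · subst h
          rw [h1, hAt, if_pos le_rfl]
          rw [show G2.rew 0 1 true = -3 from rfl]
        · rw [hq2' i (by omega), if_pos (by omega)]
          rw [show G2.rew 0 2 (G2.playA σ 0 i) = -3 by cases G2.playA σ 0 i <;> rfl]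
      rw [tsum_congr he, tsum_tail]
    have hdiff0 : G2.DiffOnly σ (dev0 σ) 0 := by
      intro h v hv
      have hv' : v ≠ 0 := hv
      simp [dev0, hv']
    have hrewd0 : G2.reward 0 (dev0 σ) 0 = 0 := by
      rw [MDSG.reward]
      have he : ∀ i : ℕ, G2.rew 0 (G2.playV (dev0 σ) 0 i) (G2.playA (dev0 σ) 0 i) * G2.disc ^ i
          = 0 := by
        intro i
        rw [dev0_play σ i]
        rw [show G2.rew 0 0 (G2.playA (dev0 σ) 0 i) = 0 from rfl, zero_mul]
      rw [tsum_congr he, tsum_zero]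
    have hnash0 := hσ 0 (dev0 σ) hdiff0
    rw [G2_ER, G2_ER, hrewd0, hrew0] at hnash0
    have : (0:ℝ) < (1/2)^t := by positivity
    nlinarith
  refine ⟨?_, key⟩
  rw [G2_ER, MDSG.reward]
  have he : ∀ i : ℕ, G2.rew 1 (G2.playV σ 0 i) (G2.playA σ 0 i) * G2.disc ^ i = 0 := by
    intro i
    rw [key i, show G2.rew 1 0 (G2.playA σ 0 i) = 0 from rfl, zero_mul]
  rw [tsum_congr he, tsum_zero]
end

section
/- Let an MDSG with a single start vertex v₀ (Δ(v₀) = 1) be given, and let π = v₀,a₀,v₁,a₁,… be a play such that for every j ∈ ℕ and every player p (respectively, every player p ≠ l), the upper value satisfies r̄_p(v_j) ≤ ∑_{i=0}^∞ t_p(v_{j+i},a_{j+i})·λ^i. Then there exists a Nash equilibrium (respectively, a leader strategy profile for leader l) σ whose outcome play is π, i.e. π_σ(v₀) = π. -/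
open scoped BigOperators

namespace MDSGAux
open MDSG Finset

variable {P V A : Type}

lemma playV_succ (G : MDSG P V A) (σ : Profile V A) (w : V) (n : ℕ) :
    G.playV σ w (n+1) = G.tr (G.playV σ w n) (G.playA σ w n) := rfl

lemma playA_eq (G : MDSG P V A) (σ : Profile V A) (w : V) (n : ℕ) :
    G.playA σ w n = σ (G.histState σ w n).1 (G.playV σ w n) := rfl

lemma summable_discounted (G : MDSG P V A) (c : ℕ → ℝ) (M : ℝ) (hc : ∀ i, |c i| ≤ M) :
    Summable (fun i => c i * G.disc ^ i) := by
  apply Summable.of_norm_bounded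
    ((summable_geometric_of_lt_one G.disc_pos.le G.disc_lt_one).mul_left M)
  intro i
  rw [norm_mul, norm_pow, Real.norm_eq_abs, Real.norm_eq_abs, abs_of_pos G.disc_pos]
  exact mul_le_mul_of_nonneg_right (hc i) (pow_nonneg G.disc_pos.le i)

lemma tsum_discounted_le (G : MDSG P V A) (c : ℕ → ℝ) (M : ℝ) (hc : ∀ i, |c i| ≤ M) :
    ∑' i, c i * G.disc ^ i ≤ M * (1 - G.disc)⁻¹ := by
  have h1 : ∑' i : ℕ, M * G.disc ^ i = M * (1 - G.disc)⁻¹ := by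
    rw [tsum_mul_left, tsum_geometric_of_lt_one G.disc_pos.le G.disc_lt_one]
  rw [← h1]
  refine Summable.tsum_le_tsum (fun i => ?_) (summable_discounted G c M hc)
    ((summable_geometric_of_lt_one G.disc_pos.le G.disc_lt_one).mul_left M)
  exact mul_le_mul_of_nonneg_right ((abs_le.mp (hc i)).2) (pow_nonneg G.disc_pos.le i)

variable [Fintype V] [Fintype A] [Nonempty A] [Nonempty V]

/-- Bound on one-step rewards of player `p`. -/
noncomputable def Mb (G : MDSG P V A) (p : P) : ℝ :=
  Finset.univ.sup' Finset.univ_nonempty (fun x : V × A => |G.rew p x.1 x.2|)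

lemma abs_rew_le_Mb (G : MDSG P V A) (p : P) (w : V) (b : A) : |G.rew p w b| ≤ Mb G p := by
  unfold Mb; exact Finset.le_sup' (fun x : V × A => |G.rew p x.1 x.2|) (Finset.mem_univ (w, b))

lemma reward_le_bound (G : MDSG P V A) (p : P) (σ : Profile V A) (w : V) :
    G.reward p σ w ≤ Mb G p * (1 - G.disc)⁻¹ :=
  tsum_discounted_le G _ _ (fun i => abs_rew_le_Mb G p _ _)

lemma summable_reward (G : MDSG P V A) (p : P) (σ : Profile V A) (w : V) :
    Summable (fun i => G.rew p (G.playV σ w i) (G.playA σ w i) * G.disc ^ i) :=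
  summable_discounted G _ _ (fun i => abs_rew_le_Mb G p _ _)

/-- Key telescoping bound: if the step inequality holds along a play, the
discounted reward is at most `f` of the start vertex. -/
lemma play_le (G : MDSG P V A) (f : V → ℝ) (p : P) (w : ℕ → V) (b : ℕ → A)
    (hstep : ∀ n, G.rew p (w n) (b n) + G.disc * f (w (n+1)) ≤ f (w n)) :
    ∑' i, G.rew p (w i) (b i) * G.disc ^ i ≤ f (w 0) := by
  set c : ℕ → ℝ := fun i => G.rew p (w i) (b i) with hc
  obtain ⟨K, hK⟩ : ∃ K, ∀ u : V, |f u| ≤ K :=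
    ⟨Finset.univ.sup' Finset.univ_nonempty (fun u => |f u|),
      fun u => by exact Finset.le_sup' (fun u => |f u|) (Finset.mem_univ u)⟩
  have hsum : Summable (fun i => c i * G.disc ^ i) :=
    summable_discounted G c _ (fun i => abs_rew_le_Mb G p _ _)
  have hpart : ∀ n, (∑ i ∈ Finset.range n, c i * G.disc ^ i) + G.disc ^ n * f (w n) ≤ f (w 0) := by
    intro n
    induction n with
    | zero => simp
    | succ n ih =>
      rw [Finset.sum_range_succ]
      have h2 : c n * G.disc ^ n + G.disc ^ (n+1) * f (w (n+1)) ≤ G.disc ^ n * f (w n) := by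
        have := mul_le_mul_of_nonneg_left (hstep n) (pow_nonneg G.disc_pos.le n)
        calc c n * G.disc ^ n + G.disc ^ (n+1) * f (w (n+1))
            = G.disc ^ n * (c n + G.disc * f (w (n+1))) := by ring
          _ ≤ G.disc ^ n * f (w n) := this
      linarith
  have hlim1 : Filter.Tendsto (fun n => ∑ i ∈ Finset.range n, c i * G.disc ^ i)
      Filter.atTop (nhds (∑' i, c i * G.disc ^ i)) := hsum.hasSum.tendsto_sum_nat
  have hlim2 : Filter.Tendsto (fun n => G.disc ^ n * f (w n)) Filter.atTop (nhds 0) := by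
    apply squeeze_zero_norm (a := fun n => G.disc ^ n * K)
    · intro n
      rw [norm_mul, norm_pow, Real.norm_eq_abs, Real.norm_eq_abs, abs_of_pos G.disc_pos]
      exact mul_le_mul_of_nonneg_left (hK (w n)) (pow_nonneg G.disc_pos.le n)
    · have := (tendsto_pow_atTop_nhds_zero_of_lt_one G.disc_pos.le G.disc_lt_one).mul_const K
      simpa using this
  have := hlim1.add hlim2
  rw [add_zero] at this
  exact le_of_tendsto this (Filter.Eventually.of_forall hpart)

/-- Dual telescoping bound. -/
lemma play_ge (G : MDSG P V A) (f : V → ℝ) (p : P) (w : ℕ → V) (b : ℕ → A)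
    (hstep : ∀ n, f (w n) ≤ G.rew p (w n) (b n) + G.disc * f (w (n+1))) :
    f (w 0) ≤ ∑' i, G.rew p (w i) (b i) * G.disc ^ i := by
  set c : ℕ → ℝ := fun i => G.rew p (w i) (b i) with hc
  obtain ⟨K, hK⟩ : ∃ K, ∀ u : V, |f u| ≤ K :=
    ⟨Finset.univ.sup' Finset.univ_nonempty (fun u => |f u|),
      fun u => by exact Finset.le_sup' (fun u => |f u|) (Finset.mem_univ u)⟩
  have hsum : Summable (fun i => c i * G.disc ^ i) :=
    summable_discounted G c _ (fun i => abs_rew_le_Mb G p _ _)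
  have hpart : ∀ n, f (w 0) ≤ (∑ i ∈ Finset.range n, c i * G.disc ^ i) + G.disc ^ n * f (w n) := by
    intro n
    induction n with
    | zero => simp
    | succ n ih =>
      rw [Finset.sum_range_succ]
      have h2 : G.disc ^ n * f (w n) ≤ c n * G.disc ^ n + G.disc ^ (n+1) * f (w (n+1)) := by
        have := mul_le_mul_of_nonneg_left (hstep n) (pow_nonneg G.disc_pos.le n)
        calc G.disc ^ n * f (w n) ≤ G.disc ^ n * (c n + G.disc * f (w (n+1))) := this
          _ = c n * G.disc ^ n + G.disc ^ (n+1) * f (w (n+1)) := by ring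
      linarith
  have hlim1 : Filter.Tendsto (fun n => ∑ i ∈ Finset.range n, c i * G.disc ^ i)
      Filter.atTop (nhds (∑' i, c i * G.disc ^ i)) := hsum.hasSum.tendsto_sum_nat
  have hlim2 : Filter.Tendsto (fun n => G.disc ^ n * f (w n)) Filter.atTop (nhds 0) := by
    apply squeeze_zero_norm (a := fun n => G.disc ^ n * K)
    · intro n
      rw [norm_mul, norm_pow, Real.norm_eq_abs, Real.norm_eq_abs, abs_of_pos G.disc_pos]
      exact mul_le_mul_of_nonneg_left (hK (w n)) (pow_nonneg G.disc_pos.le n)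
    · have := (tendsto_pow_atTop_nhds_zero_of_lt_one G.disc_pos.le G.disc_lt_one).mul_const K
      simpa using this
  have := hlim1.add hlim2
  rw [add_zero] at this
  exact ge_of_tendsto this (Filter.Eventually.of_forall hpart)

end MDSGAux
namespace MDSGAux
open MDSG Finset

variable {P V A : Type} [Fintype V] [Fintype A] [Nonempty A] [Nonempty V]

open Classical in
/-- One-step Shapley operator for the zero-sum game of player `p` against the rest. -/
noncomputable def Phi (G : MDSG P V A) (p : P) (f : V → ℝ) : V → ℝ := fun w =>
  if G.owner w = p then
    Finset.univ.sup' Finset.univ_nonempty (fun b => G.rew p w b + G.disc * f (G.tr w b))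
  else
    Finset.univ.inf' Finset.univ_nonempty (fun b => G.rew p w b + G.disc * f (G.tr w b))

lemma sup'_le_sup'_add {s : Finset A} (hs : s.Nonempty) (u u' : A → ℝ) (c : ℝ)
    (h : ∀ b ∈ s, u b ≤ u' b + c) : s.sup' hs u ≤ s.sup' hs u' + c := by
  apply Finset.sup'_le
  intro b hb
  exact le_trans (h b hb) (add_le_add_left (Finset.le_sup' u' hb) c)

lemma inf'_le_inf'_add {s : Finset A} (hs : s.Nonempty) (u u' : A → ℝ) (c : ℝ)
    (h : ∀ b ∈ s, u b ≤ u' b + c) : s.inf' hs u ≤ s.inf' hs u' + c := by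
  obtain ⟨b, hb, hbe⟩ := Finset.exists_mem_eq_inf' hs u'
  calc s.inf' hs u ≤ u b := Finset.inf'_le u hb
    _ ≤ u' b + c := h b hb
    _ = s.inf' hs u' + c := by rw [hbe]

lemma phi_dist (G : MDSG P V A) (p : P) (f g : V → ℝ) (w : V) :
    |Phi G p f w - Phi G p g w| ≤ G.disc * dist f g := by
  have key : ∀ (f g : V → ℝ) (b : A),
      G.rew p w b + G.disc * f (G.tr w b) ≤
        (G.rew p w b + G.disc * g (G.tr w b)) + G.disc * dist f g := by
    intro f g b
    have h1 : dist (f (G.tr w b)) (g (G.tr w b)) ≤ dist f g := dist_le_pi_dist f g _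
    have h2 : f (G.tr w b) - g (G.tr w b) ≤ dist f g := by
      rw [Real.dist_eq] at h1
      linarith [le_abs_self (f (G.tr w b) - g (G.tr w b))]
    nlinarith [G.disc_pos.le]
  rw [abs_sub_le_iff]
  unfold Phi
  by_cases ho : G.owner w = p
  · rw [if_pos ho, if_pos ho]
    constructor
    · have h := sup'_le_sup'_add (s := (Finset.univ : Finset A)) Finset.univ_nonempty
        (fun b => G.rew p w b + G.disc * f (G.tr w b))
        (fun b => G.rew p w b + G.disc * g (G.tr w b)) (G.disc * dist f g)
        (fun b _ => key f g b)
      linarith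
    · have h := sup'_le_sup'_add (s := (Finset.univ : Finset A)) Finset.univ_nonempty
        (fun b => G.rew p w b + G.disc * g (G.tr w b))
        (fun b => G.rew p w b + G.disc * f (G.tr w b)) (G.disc * dist f g)
        (fun b _ => by rw [dist_comm]; exact key g f b)
      linarith
  · rw [if_neg ho, if_neg ho]
    constructor
    · have h := inf'_le_inf'_add (s := (Finset.univ : Finset A)) Finset.univ_nonempty
        (fun b => G.rew p w b + G.disc * f (G.tr w b))
        (fun b => G.rew p w b + G.disc * g (G.tr w b)) (G.disc * dist f g)
        (fun b _ => key f g b)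
      linarith
    · have h := inf'_le_inf'_add (s := (Finset.univ : Finset A)) Finset.univ_nonempty
        (fun b => G.rew p w b + G.disc * g (G.tr w b))
        (fun b => G.rew p w b + G.disc * f (G.tr w b)) (G.disc * dist f g)
        (fun b _ => by rw [dist_comm]; exact key g f b)
      linarith

lemma phi_contracting (G : MDSG P V A) (p : P) :
    ContractingWith ⟨G.disc, G.disc_pos.le⟩ (Phi G p) := by
  constructor
  · exact_mod_cast G.disc_lt_one
  · apply LipschitzWith.of_dist_le_mul
    intro f g
    show dist (Phi G p f) (Phi G p g) ≤ G.disc * dist f g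
    rw [dist_pi_le_iff (mul_nonneg G.disc_pos.le dist_nonneg)]
    intro w
    rw [Real.dist_eq]
    exact phi_dist G p f g w

/-- The value function of the zero-sum game of `p` against the coalition of the others. -/
noncomputable def fstar (G : MDSG P V A) (p : P) : V → ℝ :=
  (phi_contracting G p).fixedPoint (Phi G p)

lemma fstar_eq (G : MDSG P V A) (p : P) : Phi G p (fstar G p) = fstar G p :=
  (phi_contracting G p).fixedPoint_isFixedPt

lemma fstar_eq_sup (G : MDSG P V A) (p : P) (w : V) (ho : G.owner w = p) :
    fstar G p w = Finset.univ.sup' Finset.univ_nonempty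
      (fun b => G.rew p w b + G.disc * fstar G p (G.tr w b)) := by
  conv_lhs => rw [← fstar_eq G p]
  simp [Phi, ho]

lemma fstar_eq_inf (G : MDSG P V A) (p : P) (w : V) (ho : G.owner w ≠ p) :
    fstar G p w = Finset.univ.inf' Finset.univ_nonempty
      (fun b => G.rew p w b + G.disc * fstar G p (G.tr w b)) := by
  conv_lhs => rw [← fstar_eq G p]
  simp [Phi, ho]

lemma step_le_fstar_of_owner (G : MDSG P V A) (p : P) (w : V) (ho : G.owner w = p) (b : A) :
    G.rew p w b + G.disc * fstar G p (G.tr w b) ≤ fstar G p w := by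
  rw [fstar_eq_sup G p w ho]
  exact Finset.le_sup' (fun b => G.rew p w b + G.disc * fstar G p (G.tr w b)) (Finset.mem_univ b)

lemma fstar_le_step_of_not_owner (G : MDSG P V A) (p : P) (w : V) (ho : G.owner w ≠ p) (b : A) :
    fstar G p w ≤ G.rew p w b + G.disc * fstar G p (G.tr w b) := by
  rw [fstar_eq_inf G p w ho]
  exact Finset.inf'_le (fun b => G.rew p w b + G.disc * fstar G p (G.tr w b)) (Finset.mem_univ b)

/-- A positional punishment action against `p`. -/
noncomputable def punishA (G : MDSG P V A) (p : P) (w : V) : A :=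
  Classical.choose (Finset.exists_mem_eq_inf' (Finset.univ_nonempty (α := A))
    (fun b => G.rew p w b + G.disc * fstar G p (G.tr w b)))

lemma punishA_spec (G : MDSG P V A) (p : P) (w : V) (ho : G.owner w ≠ p) :
    G.rew p w (punishA G p w) + G.disc * fstar G p (G.tr w (punishA G p w)) = fstar G p w := by
  have := Classical.choose_spec (Finset.exists_mem_eq_inf' (Finset.univ_nonempty (α := A))
    (fun b => G.rew p w b + G.disc * fstar G p (G.tr w b)))
  rw [fstar_eq_inf G p w ho]
  exact (this.2).symm

/-- A positional best-response action for `p`. -/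
noncomputable def bestA (G : MDSG P V A) (p : P) (w : V) : A :=
  Classical.choose (Finset.exists_mem_eq_sup' (Finset.univ_nonempty (α := A))
    (fun b => G.rew p w b + G.disc * fstar G p (G.tr w b)))

lemma bestA_spec (G : MDSG P V A) (p : P) (w : V) (ho : G.owner w = p) :
    G.rew p w (bestA G p w) + G.disc * fstar G p (G.tr w (bestA G p w)) = fstar G p w := by
  have := Classical.choose_spec (Finset.exists_mem_eq_sup' (Finset.univ_nonempty (α := A))
    (fun b => G.rew p w b + G.disc * fstar G p (G.tr w b)))
  rw [fstar_eq_sup G p w ho]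
  exact (this.2).symm

/-- `fstar` is below the upper value. -/
lemma fstar_le_upperValue (G : MDSG P V A) (p : P) (w : V) :
    fstar G p w ≤ G.upperValue p w := by
  unfold MDSG.upperValue
  apply le_ciInf
  intro τo
  have hbdd : BddAbove (Set.range fun τp => G.reward p (G.combine p τp τo) w) := by
    refine ⟨Mb G p * (1 - G.disc)⁻¹, ?_⟩
    rintro x ⟨τp, rfl⟩
    exact reward_le_bound G p _ w
  refine le_ciSup_of_le hbdd (fun _ u => bestA G p u) ?_
  set σc := G.combine p (fun _ u => bestA G p u) τo with hσc
  apply play_ge G (fstar G p) p (fun n => G.playV σc w n) (fun n => G.playA σc w n)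
  intro n
  rw [playV_succ G σc w n]
  set u := G.playV σc w n with hu
  by_cases ho : G.owner u = p
  · have hb : G.playA σc w n = bestA G p u := by
      rw [playA_eq]
      exact if_pos ho
    rw [hb]
    exact (bestA_spec G p u ho).ge
  · exact fstar_le_step_of_not_owner G p u ho _

end MDSGAux
namespace MDSGAux
open MDSG Finset

variable {P V A : Type}

/-- The compliant history of length `n` along the play `v, a`. -/
def comp (v : ℕ → V) (a : ℕ → A) (n : ℕ) : List (V × A) :=
  (List.range n).map (fun i => (v i, a i))

lemma comp_length (v : ℕ → V) (a : ℕ → A) (n : ℕ) : (comp v a n).length = n := by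
  simp [comp]

lemma comp_succ (v : ℕ → V) (a : ℕ → A) (n : ℕ) :
    comp v a (n+1) = comp v a n ++ [(v n, a n)] := by
  simp [comp, List.range_succ]

lemma comp_take (v : ℕ → V) (a : ℕ → A) {m n : ℕ} (h : m ≤ n) :
    (comp v a n).take m = comp v a m := by
  simp [comp, ← List.map_take, List.take_range, Nat.min_eq_left h]

/-- The history `h` disagrees with the compliant history within its first `i+1` entries. -/
def DevP (v : ℕ → V) (a : ℕ → A) (h : List (V × A)) (i : ℕ) : Prop :=
  i < h.length ∧ h.take (i+1) ≠ comp v a (i+1)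

variable [Fintype V] [Fintype A] [Nonempty A] [Nonempty V]

open Classical in
/-- The reward-and-punish strategy profile built from the play `v, a`. -/
noncomputable def sig (G : MDSG P V A) (v : ℕ → V) (a : ℕ → A) : Profile V A := fun h u =>
  if hdev : ∃ i, DevP v a h i then punishA G (G.owner (v (Nat.find hdev))) u
  else a h.length

lemma sig_comp (G : MDSG P V A) (v : ℕ → V) (a : ℕ → A) (n : ℕ) (u : V) :
    sig G v a (comp v a n) u = a n := by
  have hno : ¬ ∃ i, DevP v a (comp v a n) i := by
    rintro ⟨i, hi, hne⟩
    rw [comp_length] at hi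
    exact hne (comp_take v a hi)
  rw [sig, dif_neg hno, comp_length]

lemma hist_length (G : MDSG P V A) (σ : Profile V A) (w : V) (n : ℕ) :
    (G.histState σ w n).1.length = n := by
  induction n with
  | zero => rfl
  | succ n ih => simp [MDSG.histState, ih]

lemma hist_take (G : MDSG P V A) (σ : Profile V A) (w : V) {m n : ℕ} (h : m ≤ n) :
    ((G.histState σ w n).1).take m = (G.histState σ w m).1 := by
  induction n with
  | zero =>
    obtain rfl := Nat.le_zero.mp h
    rfl
  | succ n ih =>
    rcases Nat.lt_or_ge m (n+1) with hm | hm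
    · have hmn : m ≤ n := Nat.lt_succ_iff.mp hm
      have : ((G.histState σ w (n+1)).1).take m = ((G.histState σ w n).1).take m := by
        show ((G.histState σ w n).1 ++ _).take m = _
        rw [List.take_append_of_le_length (by rw [hist_length]; exact hmn)]
      rw [this, ih hmn]
    · have hm' : m = n + 1 := le_antisymm h hm
      subst hm'
      exact List.take_of_length_le (by rw [hist_length])

/-- If `σ'` follows the prescribed actions up to time `n`, its history is compliant. -/
lemma hist_compliant (G : MDSG P V A) (σ' : Profile V A) (v₀ : V)
    (v : ℕ → V) (a : ℕ → A) (hstart : v 0 = v₀)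
    (hstep : ∀ i : ℕ, v (i + 1) = G.tr (v i) (a i))
    (n : ℕ) (hall : ∀ m, m < n → G.playA σ' v₀ m = a m) :
    G.histState σ' v₀ n = (comp v a n, v n) := by
  induction n with
  | zero => simp [MDSG.histState, comp, hstart]
  | succ n ih =>
    have ihn := ih (fun m hm => hall m (Nat.lt_succ_of_lt hm))
    have ha : σ' (G.histState σ' v₀ n).1 (G.histState σ' v₀ n).2 = a n := hall n (Nat.lt_succ_self n)
    show ((G.histState σ' v₀ n).1 ++ [((G.histState σ' v₀ n).2, _)], _) = _
    rw [ihn] at ha ⊢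
    simp only [ha, comp_succ, hstep n]

/-- The play of `sig` is the prescribed play. -/
lemma hist_sig (G : MDSG P V A) (v₀ : V) (v : ℕ → V) (a : ℕ → A) (hstart : v 0 = v₀)
    (hstep : ∀ i : ℕ, v (i + 1) = G.tr (v i) (a i)) (n : ℕ) :
    G.histState (sig G v a) v₀ n = (comp v a n, v n) := by
  induction n with
  | zero => simp [MDSG.histState, comp, hstart]
  | succ n ih =>
    show ((G.histState (sig G v a) v₀ n).1 ++ [((G.histState (sig G v a) v₀ n).2, _)], _) = _
    rw [ih]
    simp only [sig_comp, comp_succ, hstep n]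

end MDSGAux
namespace MDSGAux
open MDSG Finset

variable {P V A : Type}

lemma init_eq_zero (G : MDSG P V A) [Fintype V] (v₀ : V) (hv₀ : G.init v₀ = 1)
    (u : V) (hu : u ≠ v₀) : G.init u = 0 := by
  classical
  have hsum : ∑ x : V, G.init x = 1 := by
    rw [← tsum_fintype (L := SummationFilter.unconditional _)]; exact G.init_sum
  have h1 : G.init v₀ + ∑ x ∈ Finset.univ.erase v₀, G.init x = 1 := by
    rw [Finset.add_sum_erase _ _ (Finset.mem_univ v₀)]; exact hsum
  have h2 : ∑ x ∈ Finset.univ.erase v₀, G.init x = 0 := by linarith [hv₀ ▸ h1]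
  have := (Finset.sum_eq_zero_iff_of_nonneg (fun x _ => G.init_nonneg x)).mp h2
  exact this u (Finset.mem_erase.mpr ⟨hu, Finset.mem_univ u⟩)

lemma ER_eq_reward (G : MDSG P V A) [Fintype V] (v₀ : V) (hv₀ : G.init v₀ = 1)
    (p : P) (σ : Profile V A) : G.ER p σ = G.reward p σ v₀ := by
  classical
  rw [MDSG.ER, tsum_fintype]
  rw [Finset.sum_eq_single v₀
    (fun u _ hu => by rw [init_eq_zero G v₀ hv₀ u hu, zero_mul])
    (fun h => absurd (Finset.mem_univ v₀) h)]
  rw [hv₀, one_mul]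

variable [Fintype V] [Fintype A] [Nonempty A] [Nonempty V]

/-- Master lemma: the reward-and-punish profile `sig` produces the play `v, a`,
and no player `p` whose upper values are dominated by the tails of the play can
profit from a unilateral deviation. -/
lemma master (G : MDSG P V A) (v₀ : V) (hv₀ : G.init v₀ = 1)
    (v : ℕ → V) (a : ℕ → A) (hstart : v 0 = v₀)
    (hstep : ∀ i : ℕ, v (i + 1) = G.tr (v i) (a i)) :
    (∀ n : ℕ, G.playV (sig G v a) v₀ n = v n ∧ G.playA (sig G v a) v₀ n = a n) ∧
    ∀ p : P,
      (∀ j : ℕ, G.upperValue p (v j) ≤ ∑' i : ℕ, G.rew p (v (j + i)) (a (j + i)) * G.disc ^ i) →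
      ∀ σ', G.DiffOnly (sig G v a) σ' p → G.ER p σ' ≤ G.ER p (sig G v a) := by
  have hhs : ∀ n, G.histState (sig G v a) v₀ n = (comp v a n, v n) :=
    hist_sig G v₀ v a hstart hstep
  have hplay : ∀ n : ℕ, G.playV (sig G v a) v₀ n = v n ∧ G.playA (sig G v a) v₀ n = a n := by
    intro n
    constructor
    · show (G.histState (sig G v a) v₀ n).2 = v n
      rw [hhs n]
    · show sig G v a (G.histState (sig G v a) v₀ n).1 (G.playV (sig G v a) v₀ n) = a n
      rw [hhs n]
      exact sig_comp G v a n _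
  refine ⟨hplay, ?_⟩
  intro p hyp σ' hdiff
  rw [ER_eq_reward G v₀ hv₀ p σ', ER_eq_reward G v₀ hv₀ p (sig G v a)]
  -- the reward of `sig` along the play
  have hrs : G.reward p (sig G v a) v₀ =
      ∑' i : ℕ, G.rew p (v i) (a i) * G.disc ^ i := by
    apply tsum_congr
    intro i
    rw [(hplay i).1, (hplay i).2]
  by_cases hall : ∀ n, G.playA σ' v₀ n = a n
  · -- no deviation: same play, equal rewards
    have h' : ∀ n, G.histState σ' v₀ n = (comp v a n, v n) := fun n =>
      hist_compliant G σ' v₀ v a hstart hstep n (fun m _ => hall m)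
    have : G.reward p σ' v₀ = G.reward p (sig G v a) v₀ := by
      rw [hrs]
      apply tsum_congr
      intro i
      have h1 : G.playV σ' v₀ i = v i := by show (G.histState σ' v₀ i).2 = v i; rw [h' i]
      rw [h1, hall i]
    exact this.le
  · -- deviation: punishment kicks in
    push_neg at hall
    have hex : ∃ n, G.playA σ' v₀ n ≠ a n := hall
    classical
    set j := Nat.find hex with hjdef
    have hj : G.playA σ' v₀ j ≠ a j := Nat.find_spec hex
    have hjm : ∀ m, m < j → G.playA σ' v₀ m = a m := by
      intro m hm
      by_contra hc
      exact Nat.find_min hex hm hc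
    have hhist : ∀ n, n ≤ j → G.histState σ' v₀ n = (comp v a n, v n) := fun n hn =>
      hist_compliant G σ' v₀ v a hstart hstep n (fun m hm => hjm m (lt_of_lt_of_le hm hn))
    have hpVj : G.playV σ' v₀ j = v j := by
      show (G.histState σ' v₀ j).2 = v j; rw [hhist j le_rfl]
    -- the deviator owns `v j`
    have hp : G.owner (v j) = p := by
      by_contra ho
      apply hj
      have : G.playA σ' v₀ j = σ' (comp v a j) (v j) := by
        rw [playA_eq, hpVj, hhist j le_rfl]
      rw [this, hdiff (comp v a j) (v j) ho, sig_comp]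
    -- the history after time `j` deviates exactly at `j`
    have hcj : G.histState σ' v₀ (j+1) =
        (comp v a j ++ [(v j, G.playA σ' v₀ j)], G.tr (v j) (G.playA σ' v₀ j)) := by
      show ((G.histState σ' v₀ j).1 ++ [((G.histState σ' v₀ j).2, _)], _) = _
      have hc : σ' (G.histState σ' v₀ j).1 (G.histState σ' v₀ j).2 = G.playA σ' v₀ j := rfl
      rw [hc, hhist j le_rfl]
    have hsig_pun : ∀ n, j < n → ∀ u,
        sig G v a (G.histState σ' v₀ n).1 u = punishA G p u := by
      intro n hn u
      set h_n := (G.histState σ' v₀ n).1 with hhn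
      have hlen : h_n.length = n := hist_length G σ' v₀ n
      have hdevj : DevP v a h_n j := by
        refine ⟨by rw [hlen]; exact hn, ?_⟩
        have ht : h_n.take (j+1) = (G.histState σ' v₀ (j+1)).1 := hist_take G σ' v₀ hn
        rw [ht, hcj, comp_succ]
        intro heq
        have := List.append_cancel_left heq
        simp only [List.cons.injEq, Prod.mk.injEq] at this
        exact hj this.1.2
      have hdev : ∃ i, DevP v a h_n i := ⟨j, hdevj⟩
      have hfind : Nat.find hdev = j := by
        rw [Nat.find_eq_iff]
        refine ⟨hdevj, ?_⟩
        intro m hm ⟨_, hne⟩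
        apply hne
        have hm1 : m + 1 ≤ n := by omega
        rw [hist_take G σ' v₀ hm1, hhist (m+1) (by omega)]
      rw [sig, dif_pos hdev, hfind, hp]
    -- step inequalities along the tail of the deviating play
    set wseq : ℕ → V := fun i => G.playV σ' v₀ (j + i) with hwseq
    set bseq : ℕ → A := fun i => G.playA σ' v₀ (j + i) with hbseq
    have hstep' : ∀ i, G.rew p (wseq i) (bseq i) + G.disc * fstar G p (wseq (i+1)) ≤
        fstar G p (wseq i) := by
      intro i
      have hsucc : wseq (i+1) = G.tr (wseq i) (bseq i) := by
        show G.playV σ' v₀ (j + (i+1)) = _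
        rw [show j + (i+1) = (j+i) + 1 by omega, playV_succ]
      rw [hsucc]
      rcases Nat.eq_zero_or_pos i with hi | hi
      · subst hi
        have : wseq 0 = v j := by simpa [hwseq] using hpVj
        rw [this]
        exact step_le_fstar_of_owner G p (v j) hp _
      · by_cases ho : G.owner (wseq i) = p
        · exact step_le_fstar_of_owner G p _ ho _
        · have hb : bseq i = punishA G p (wseq i) := by
            show G.playA σ' v₀ (j+i) = _
            rw [playA_eq]
            rw [hdiff _ _ ho]
            exact hsig_pun (j+i) (by omega) _
          rw [hb]
          exact (punishA_spec G p (wseq i) ho).le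
    have htail : ∑' i, G.rew p (wseq i) (bseq i) * G.disc ^ i ≤
        ∑' i : ℕ, G.rew p (v (j + i)) (a (j + i)) * G.disc ^ i :=
      le_trans (play_le G (fstar G p) p wseq bseq hstep')
        (le_trans (by simpa [hwseq] using (hpVj ▸ fstar_le_upperValue G p (v j) :
            fstar G p (G.playV σ' v₀ (j+0)) ≤ G.upperValue p (v j)) ) (hyp j))
    -- split both rewards at time `j`
    have hsplit : ∀ (V' : ℕ → V) (A' : ℕ → A),
        (∑' i : ℕ, G.rew p (V' i) (A' i) * G.disc ^ i) =
        (∑ i ∈ Finset.range j, G.rew p (V' i) (A' i) * G.disc ^ i) +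
          (∑' i : ℕ, G.rew p (V' (j + i)) (A' (j + i)) * G.disc ^ i) * G.disc ^ j := by
      intro V' A'
      have hs : Summable (fun i => G.rew p (V' i) (A' i) * G.disc ^ i) :=
        summable_discounted G _ _ (fun i => abs_rew_le_Mb G p _ _)
      rw [← Summable.sum_add_tsum_nat_add j hs]
      congr 1
      rw [← tsum_mul_right]
      apply tsum_congr
      intro i
      rw [show i + j = j + i by omega, pow_add]
      ring
    have h1 : G.reward p σ' v₀ =
        (∑ i ∈ Finset.range j, G.rew p (G.playV σ' v₀ i) (G.playA σ' v₀ i) * G.disc ^ i) +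
          (∑' i, G.rew p (wseq i) (bseq i) * G.disc ^ i) * G.disc ^ j :=
      hsplit (G.playV σ' v₀) (G.playA σ' v₀)
    have h2 : G.reward p (sig G v a) v₀ =
        (∑ i ∈ Finset.range j, G.rew p (v i) (a i) * G.disc ^ i) +
          (∑' i : ℕ, G.rew p (v (j + i)) (a (j + i)) * G.disc ^ i) * G.disc ^ j := by
      rw [hrs]; exact hsplit v a
    have hpre : ∀ i ∈ Finset.range j,
        G.rew p (G.playV σ' v₀ i) (G.playA σ' v₀ i) * G.disc ^ i =
        G.rew p (v i) (a i) * G.disc ^ i := by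
      intro i hi
      rw [Finset.mem_range] at hi
      have h1' : G.playV σ' v₀ i = v i := by
        show (G.histState σ' v₀ i).2 = v i; rw [hhist i hi.le]
      rw [h1', hjm i hi]
    rw [h1, h2, Finset.sum_congr rfl hpre]
    exact add_le_add_right (mul_le_mul_of_nonneg_right htail (pow_nonneg G.disc_pos.le j)) _

end MDSGAux
open MDSG in
/-- Let an MDSG with a single start vertex `v₀` (i.e. `init v₀ = 1`) be given,
and let `π = v 0, a 0, v 1, a 1, …` be a play from `v₀`.  If for every
position `j` and every player `p` (respectively, every player `p ≠ l`), the
upper value of `p` at `v j` is at most the discounted reward of `p` along the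
tail of `π` from position `j` on, then there is a Nash equilibrium
(respectively, a leader strategy profile for leader `l`) whose outcome play
from `v₀` is exactly `π`. -/
theorem sufficient_condition_for_outcome_plays {P V A : Type} (G : MDSG P V A)
    (v₀ : V) (hv₀ : G.init v₀ = 1)
    (v : ℕ → V) (a : ℕ → A) (hstart : v 0 = v₀)
    (hstep : ∀ i : ℕ, v (i + 1) = G.tr (v i) (a i)) :
    ((∀ (j : ℕ) (p : P),
        G.upperValue p (v j) ≤
          ∑' i : ℕ, G.rew p (v (j + i)) (a (j + i)) * G.disc ^ i) →
      ∃ σ : Profile V A, G.IsNash σ ∧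
        ∀ n : ℕ, G.playV σ v₀ n = v n ∧ G.playA σ v₀ n = a n) ∧
    (∀ l : P,
      (∀ (j : ℕ) (p : P), p ≠ l →
        G.upperValue p (v j) ≤
          ∑' i : ℕ, G.rew p (v (j + i)) (a (j + i)) * G.disc ^ i) →
      ∃ σ : Profile V A, G.IsLeaderSP l σ ∧
        ∀ n : ℕ, G.playV σ v₀ n = v n ∧ G.playA σ v₀ n = a n) := by
  have hfV : Finite V := G.fin_V
  have hfA : Finite A := G.fin_A
  letI : Fintype V := Fintype.ofFinite V
  letI : Fintype A := Fintype.ofFinite A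
  haveI : Nonempty A := G.nonempty_A
  haveI : Nonempty V := ⟨v₀⟩
  obtain ⟨hplay, hmain⟩ := MDSGAux.master G v₀ hv₀ v a hstart hstep
  constructor
  · intro hyp
    exact ⟨MDSGAux.sig G v a, fun p σ' hd => hmain p (fun j => hyp j p) σ' hd, hplay⟩
  · intro l hyp
    exact ⟨MDSGAux.sig G v a, fun p hpl σ' hd => hmain p (fun j => hyp j p hpl) σ' hd, hplay⟩
end

section
/- Every multi-player discounted sum game has a pure Nash equilibrium (and hence, for any designated leader, a pure leader strategy profile). -/
open scoped BigOperators

namespace MDSGNash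

open Finset Filter

section Pre

variable {ι : Type*}

lemma abs_sup'_sub (s : Finset ι) (hs : s.Nonempty) (f g : ι → ℝ) {D : ℝ}
    (h : ∀ a ∈ s, |f a - g a| ≤ D) : |s.sup' hs f - s.sup' hs g| ≤ D := by
  rw [abs_sub_le_iff]
  constructor
  · rw [sub_le_iff_le_add]
    refine Finset.sup'_le _ _ fun a ha => ?_
    have h1 := (abs_sub_le_iff.mp (h a ha)).1
    have h2 := Finset.le_sup' g ha
    linarith
  · rw [sub_le_iff_le_add]
    refine Finset.sup'_le _ _ fun a ha => ?_
    have h1 := (abs_sub_le_iff.mp (h a ha)).2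
    have h2 := Finset.le_sup' f ha
    linarith

lemma abs_inf'_sub (s : Finset ι) (hs : s.Nonempty) (f g : ι → ℝ) {D : ℝ}
    (h : ∀ a ∈ s, |f a - g a| ≤ D) : |s.inf' hs f - s.inf' hs g| ≤ D := by
  rw [abs_sub_le_iff]
  constructor
  · rw [sub_le_iff_le_add]
    obtain ⟨a, ha, hg⟩ := Finset.exists_mem_eq_inf' hs g
    have h1 := (abs_sub_le_iff.mp (h a ha)).1
    have h2 := Finset.inf'_le f ha
    rw [hg]; linarith
  · rw [sub_le_iff_le_add]
    obtain ⟨a, ha, hg⟩ := Finset.exists_mem_eq_inf' hs f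
    have h1 := (abs_sub_le_iff.mp (h a ha)).2
    have h2 := Finset.inf'_le g ha
    rw [hg]; linarith

end Pre

variable {P V A : Type} [Fintype V] [Fintype A] [Nonempty A] [DecidableEq P] [DecidableEq A]

/-- A uniform bound on the rewards. -/
lemma exists_bound (G : MDSG P V A) : ∃ K : ℝ, 0 ≤ K ∧ ∀ p v a, |G.rew p v a| ≤ K := by
  have := G.fin_P
  rcases isEmpty_or_nonempty (P × V × A) with h | h
  · exact ⟨0, le_refl 0, fun p v a => (h.false ⟨p, v, a⟩).elim⟩
  · obtain ⟨x, hx⟩ := Finite.exists_max (fun x : P × V × A => |G.rew x.1 x.2.1 x.2.2|)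
    exact ⟨_, abs_nonneg _, fun p v a => hx ⟨p, v, a⟩⟩

noncomputable def Kb (G : MDSG P V A) : ℝ := (exists_bound G).choose

lemma Kb_nonneg (G : MDSG P V A) : 0 ≤ Kb G := (exists_bound G).choose_spec.1

lemma abs_rew_le (G : MDSG P V A) (p : P) (v : V) (a : A) : |G.rew p v a| ≤ Kb G :=
  (exists_bound G).choose_spec.2 p v a

/-- Bound on the total discounted reward. -/
noncomputable def Cb (G : MDSG P V A) : ℝ := Kb G / (1 - G.disc)

lemma one_sub_disc_pos (G : MDSG P V A) : 0 < 1 - G.disc := by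
  have := G.disc_lt_one; linarith

lemma Cb_nonneg (G : MDSG P V A) : 0 ≤ Cb G :=
  div_nonneg (Kb_nonneg G) (one_sub_disc_pos G).le

/-- The one-step Bellman operator for the zero-sum game of player `p`
against the coalition of the other players. -/
noncomputable def Fop (G : MDSG P V A) (p : P) (f : V → ℝ) : V → ℝ := fun v =>
  if G.owner v = p then
    Finset.univ.sup' Finset.univ_nonempty (fun a => G.rew p v a + G.disc * f (G.tr v a))
  else
    Finset.univ.inf' Finset.univ_nonempty (fun a => G.rew p v a + G.disc * f (G.tr v a))

lemma exists_val (G : MDSG P V A) (p : P) :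
    ∃ val : V → ℝ, (∀ v, val v = Fop G p val v) ∧ ∀ v, |val v| ≤ Cb G := by
  have hd0 := G.disc_pos
  have hd1 := G.disc_lt_one
  set K : NNReal := ⟨G.disc, hd0.le⟩
  have hc : ContractingWith K (Fop G p) := by
    constructor
    · exact_mod_cast hd1
    · apply LipschitzWith.of_dist_le_mul
      intro f g
      rw [show ((K : ℝ) = G.disc) from rfl]
      rw [dist_pi_le_iff (mul_nonneg hd0.le dist_nonneg)]
      intro v
      rw [Real.dist_eq]
      have key : ∀ a ∈ (Finset.univ : Finset A),
          |(G.rew p v a + G.disc * f (G.tr v a)) - (G.rew p v a + G.disc * g (G.tr v a))|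
            ≤ G.disc * dist f g := by
        intro a _
        have h1 : |f (G.tr v a) - g (G.tr v a)| ≤ dist f g := by
          rw [← Real.dist_eq]; exact dist_le_pi_dist f g _
        have h2 : (G.rew p v a + G.disc * f (G.tr v a)) - (G.rew p v a + G.disc * g (G.tr v a))
            = G.disc * (f (G.tr v a) - g (G.tr v a)) := by ring
        rw [h2, abs_mul, abs_of_pos hd0]
        exact mul_le_mul_of_nonneg_left h1 hd0.le
      unfold Fop
      split_ifs with h
      · exact abs_sup'_sub _ _ _ _ key
      · exact abs_inf'_sub _ _ _ _ key
  refine ⟨ContractingWith.fixedPoint (Fop G p) hc, fun v =>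
    (congrFun hc.fixedPoint_isFixedPt v).symm, ?_⟩
  have hb : dist (0 : V → ℝ) (Fop G p 0) ≤ Kb G := by
    rw [dist_pi_le_iff (Kb_nonneg G)]
    intro v
    rw [Real.dist_eq, abs_sub_comm]
    simp only [Pi.zero_apply, sub_zero]
    have key : ∀ a ∈ (Finset.univ : Finset A),
        |(G.rew p v a + G.disc * (0 : V → ℝ) (G.tr v a)) - (fun _ : A => (0:ℝ)) a| ≤ Kb G := by
      intro a _
      simp only [Pi.zero_apply, mul_zero, add_zero, sub_zero]
      exact abs_rew_le G p v a
    unfold Fop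
    split_ifs with h
    · have := abs_sup'_sub (Finset.univ : Finset A) Finset.univ_nonempty
        (fun a => G.rew p v a + G.disc * (0 : V → ℝ) (G.tr v a)) (fun _ => (0:ℝ)) key
      rwa [Finset.sup'_const, sub_zero] at this
    · have := abs_inf'_sub (Finset.univ : Finset A) Finset.univ_nonempty
        (fun a => G.rew p v a + G.disc * (0 : V → ℝ) (G.tr v a)) (fun _ => (0:ℝ)) key
      rwa [Finset.inf'_const, sub_zero] at this
  intro v
  have h1 : dist ((0 : V → ℝ) v) (ContractingWith.fixedPoint (Fop G p) hc v)
      ≤ dist (0 : V → ℝ) (ContractingWith.fixedPoint (Fop G p) hc) := dist_le_pi_dist _ _ v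
  have h2 := hc.dist_fixedPoint_le (0 : V → ℝ)
  have h3 : dist (0 : V → ℝ) (Fop G p 0) / (1 - (K : ℝ)) ≤ Cb G := by
    rw [show ((K : ℝ) = G.disc) from rfl]
    unfold Cb
    gcongr
  have h4 : |ContractingWith.fixedPoint (Fop G p) hc v|
      = dist ((0 : V → ℝ) v) (ContractingWith.fixedPoint (Fop G p) hc v) := by
    rw [Real.dist_eq, Pi.zero_apply, abs_sub_comm, sub_zero]
  rw [h4]
  exact h1.trans (h2.trans h3)

/-- The (lower = upper) value of the zero-sum game of player `p`. -/
noncomputable def val (G : MDSG P V A) (p : P) : V → ℝ := (exists_val G p).choose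

lemma val_fix (G : MDSG P V A) (p : P) (v : V) : val G p v = Fop G p (val G p) v :=
  (exists_val G p).choose_spec.1 v

lemma abs_val_le (G : MDSG P V A) (p : P) (v : V) : |val G p v| ≤ Cb G :=
  (exists_val G p).choose_spec.2 v

/-- One-step quality of action `a` at `v` for player `p`. -/
noncomputable def QQ (G : MDSG P V A) (p : P) (v : V) (a : A) : ℝ :=
  G.rew p v a + G.disc * val G p (G.tr v a)

lemma val_eq_sup (G : MDSG P V A) {p : P} {v : V} (h : G.owner v = p) :
    val G p v = Finset.univ.sup' Finset.univ_nonempty (QQ G p v) := by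
  rw [val_fix]; unfold Fop; rw [if_pos h]; rfl

lemma val_eq_inf (G : MDSG P V A) {p : P} {v : V} (h : G.owner v ≠ p) :
    val G p v = Finset.univ.inf' Finset.univ_nonempty (QQ G p v) := by
  rw [val_fix]; unfold Fop; rw [if_neg h]; rfl

lemma QQ_le_val (G : MDSG P V A) {p : P} {v : V} (h : G.owner v = p) (a : A) :
    QQ G p v a ≤ val G p v := by
  rw [val_eq_sup G h]; exact Finset.le_sup' _ (Finset.mem_univ a)

lemma val_le_QQ (G : MDSG P V A) {p : P} {v : V} (h : G.owner v ≠ p) (a : A) :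
    val G p v ≤ QQ G p v a := by
  rw [val_eq_inf G h]; exact Finset.inf'_le _ (Finset.mem_univ a)

/-- The "main-path" action: an optimal action of the owner at `v`. -/
noncomputable def mainA (G : MDSG P V A) (v : V) : A :=
  (Finset.exists_mem_eq_sup' Finset.univ_nonempty (QQ G (G.owner v) v)).choose

lemma mainA_spec (G : MDSG P V A) (v : V) :
    val G (G.owner v) v = QQ G (G.owner v) v (mainA G v) := by
  rw [val_eq_sup G rfl]
  exact (Finset.exists_mem_eq_sup' Finset.univ_nonempty (QQ G (G.owner v) v)).choose_spec.2

/-- The punishing action against player `p` at `v`. -/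
noncomputable def punishA (G : MDSG P V A) (p : P) (v : V) : A :=
  (Finset.exists_mem_eq_inf' Finset.univ_nonempty (QQ G p v)).choose

lemma punishA_spec (G : MDSG P V A) {p : P} {v : V} (h : G.owner v ≠ p) :
    val G p v = QQ G p v (punishA G p v) := by
  rw [val_eq_inf G h]
  exact (Finset.exists_mem_eq_inf' Finset.univ_nonempty (QQ G p v)).choose_spec.2

section Play

open MDSG

variable (G : MDSG P V A)

lemma histState_succ (σ : Profile V A) (v : V) (n : ℕ) :
    G.histState σ v (n+1)
      = ((G.histState σ v n).1
           ++ [((G.histState σ v n).2, σ (G.histState σ v n).1 (G.histState σ v n).2)],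
         G.tr (G.histState σ v n).2 (σ (G.histState σ v n).1 (G.histState σ v n).2)) := rfl

lemma playA_def (σ : Profile V A) (v : V) (n : ℕ) :
    G.playA σ v n = σ (G.histState σ v n).1 (G.histState σ v n).2 := rfl

lemma playV_def (σ : Profile V A) (v : V) (n : ℕ) :
    G.playV σ v n = (G.histState σ v n).2 := rfl

lemma playV_succ (σ : Profile V A) (v : V) (n : ℕ) :
    G.playV σ v (n+1) = G.tr (G.playV σ v n) (G.playA σ v n) := rfl

lemma hist_agree (σ σ' : Profile V A) (v : V) (n : ℕ)
    (h : ∀ i, i < n → G.playA σ' v i = G.playA σ v i) :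
    G.histState σ' v n = G.histState σ v n := by
  induction n with
  | zero => rfl
  | succ n ih =>
    have h1 := ih (fun i hi => h i (Nat.lt_succ_of_lt hi))
    have h2 : G.playA σ' v n = G.playA σ v n := h n (Nat.lt_succ_self n)
    rw [playA_def, playA_def, h1] at h2
    rw [histState_succ, histState_succ, h1, h2]

lemma summable_play (p : P) (w : ℕ → V) (α : ℕ → A) :
    Summable (fun i => G.rew p (w i) (α i) * G.disc ^ i) := by
  apply Summable.of_abs
  refine Summable.of_nonneg_of_le (fun i => abs_nonneg _) (fun i => ?_)
    ((summable_geometric_of_lt_one G.disc_pos.le G.disc_lt_one).mul_left (Kb G))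
  rw [abs_mul, abs_pow, abs_of_pos G.disc_pos]
  exact mul_le_mul_of_nonneg_right (abs_rew_le G p _ _) (pow_nonneg G.disc_pos.le i)

lemma val_le_tsum (p : P) (w : ℕ → V) (α : ℕ → A)
    (h : ∀ i, val G p (w i) ≤ G.rew p (w i) (α i) + G.disc * val G p (w (i+1))) :
    val G p (w 0) ≤ ∑' i, G.rew p (w i) (α i) * G.disc ^ i := by
  have hs := summable_play G p w α
  have hpart : ∀ n, val G p (w 0)
      ≤ ∑ i ∈ Finset.range n, G.rew p (w i) (α i) * G.disc ^ i
          + G.disc ^ n * val G p (w n) := by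
    intro n
    induction n with
    | zero => simp
    | succ n ih =>
      have h2 : (0:ℝ) ≤ G.disc ^ n := pow_nonneg G.disc_pos.le n
      have h3 := mul_le_mul_of_nonneg_left (h n) h2
      calc val G p (w 0)
          ≤ ∑ i ∈ Finset.range n, G.rew p (w i) (α i) * G.disc ^ i
              + G.disc ^ n * val G p (w n) := ih
        _ ≤ ∑ i ∈ Finset.range n, G.rew p (w i) (α i) * G.disc ^ i
              + G.disc ^ n * (G.rew p (w n) (α n) + G.disc * val G p (w (n+1))) :=
            add_le_add_right h3 _
        _ = ∑ i ∈ Finset.range (n+1), G.rew p (w i) (α i) * G.disc ^ i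
              + G.disc ^ (n+1) * val G p (w (n+1)) := by
            rw [Finset.sum_range_succ, pow_succ]; ring
  have hCb : ∀ n, G.disc ^ n * val G p (w n) ≤ G.disc ^ n * Cb G := fun n =>
    mul_le_mul_of_nonneg_left (le_of_abs_le (abs_val_le G p (w n)))
      (pow_nonneg G.disc_pos.le n)
  have hub : ∀ n, val G p (w 0)
      ≤ ∑ i ∈ Finset.range n, G.rew p (w i) (α i) * G.disc ^ i + G.disc ^ n * Cb G :=
    fun n => (hpart n).trans (add_le_add_right (hCb n) _)
  have hlim : Tendsto
      (fun n => ∑ i ∈ Finset.range n, G.rew p (w i) (α i) * G.disc ^ i + G.disc ^ n * Cb G)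
      atTop (nhds ((∑' i, G.rew p (w i) (α i) * G.disc ^ i) + 0 * Cb G)) :=
    (hs.hasSum.tendsto_sum_nat).add
      ((tendsto_pow_atTop_nhds_zero_of_lt_one G.disc_pos.le G.disc_lt_one).mul_const (Cb G))
  rw [zero_mul, add_zero] at hlim
  exact ge_of_tendsto' hlim hub

lemma tsum_le_val (p : P) (w : ℕ → V) (α : ℕ → A)
    (h : ∀ i, G.rew p (w i) (α i) + G.disc * val G p (w (i+1)) ≤ val G p (w i)) :
    ∑' i, G.rew p (w i) (α i) * G.disc ^ i ≤ val G p (w 0) := by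
  have hs := summable_play G p w α
  have hpart : ∀ n, ∑ i ∈ Finset.range n, G.rew p (w i) (α i) * G.disc ^ i
      + G.disc ^ n * val G p (w n) ≤ val G p (w 0) := by
    intro n
    induction n with
    | zero => simp
    | succ n ih =>
      have h2 : (0:ℝ) ≤ G.disc ^ n := pow_nonneg G.disc_pos.le n
      have h3 := mul_le_mul_of_nonneg_left (h n) h2
      calc ∑ i ∈ Finset.range (n+1), G.rew p (w i) (α i) * G.disc ^ i
              + G.disc ^ (n+1) * val G p (w (n+1))
          = ∑ i ∈ Finset.range n, G.rew p (w i) (α i) * G.disc ^ i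
              + G.disc ^ n * (G.rew p (w n) (α n) + G.disc * val G p (w (n+1))) := by
            rw [Finset.sum_range_succ, pow_succ]; ring
        _ ≤ ∑ i ∈ Finset.range n, G.rew p (w i) (α i) * G.disc ^ i
              + G.disc ^ n * val G p (w n) := add_le_add_right h3 _
        _ ≤ val G p (w 0) := ih
  have hCb : ∀ n, G.disc ^ n * (-Cb G) ≤ G.disc ^ n * val G p (w n) := fun n =>
    mul_le_mul_of_nonneg_left ((abs_le.mp (abs_val_le G p (w n))).1)
      (pow_nonneg G.disc_pos.le n)
  have hub : ∀ n, ∑ i ∈ Finset.range n, G.rew p (w i) (α i) * G.disc ^ i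
      + G.disc ^ n * (-Cb G) ≤ val G p (w 0) :=
    fun n => (add_le_add_right (hCb n) _).trans (hpart n)
  have hlim : Tendsto
      (fun n => ∑ i ∈ Finset.range n, G.rew p (w i) (α i) * G.disc ^ i + G.disc ^ n * (-Cb G))
      atTop (nhds ((∑' i, G.rew p (w i) (α i) * G.disc ^ i) + 0 * (-Cb G))) :=
    (hs.hasSum.tendsto_sum_nat).add
      ((tendsto_pow_atTop_nhds_zero_of_lt_one G.disc_pos.le G.disc_lt_one).mul_const (-Cb G))
  rw [zero_mul, add_zero] at hlim
  exact le_of_tendsto' hlim hub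

lemma reward_split (p : P) (τ : Profile V A) (v : V) (n : ℕ) :
    G.reward p τ v
      = ∑ i ∈ Finset.range n, G.rew p (G.playV τ v i) (G.playA τ v i) * G.disc ^ i
        + (∑' i, G.rew p (G.playV τ v (n+i)) (G.playA τ v (n+i)) * G.disc ^ i) * G.disc ^ n := by
  have hs := summable_play G p (G.playV τ v) (G.playA τ v)
  rw [MDSG.reward, ← Summable.sum_add_tsum_nat_add n hs]
  congr 1
  rw [← tsum_mul_right]
  apply tsum_congr
  intro i
  rw [show i + n = n + i from Nat.add_comm i n, pow_add]
  ring

end Play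

section Strategy

open MDSG

variable (G : MDSG P V A)

lemma histState_succ_fst (σ : Profile V A) (v : V) (n : ℕ) :
    (G.histState σ v (n+1)).1
      = (G.histState σ v n).1
          ++ [((G.histState σ v n).2, σ (G.histState σ v n).1 (G.histState σ v n).2)] := rfl

/-- State machine tracking the first deviator from the main path. -/
noncomputable def devStep (G : MDSG P V A) (m : Option P) (x : V × A) : Option P :=
  match m with
  | none => if x.2 = mainA G x.1 then none else some (G.owner x.1)
  | some q => some q

noncomputable def devState (G : MDSG P V A) (h : List (V × A)) : Option P :=
  h.foldl (devStep G) none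

lemma devState_append (h : List (V × A)) (x : V × A) :
    devState G (h ++ [x]) = devStep G (devState G h) x := by
  simp [devState, List.foldl_append]

/-- The grim-trigger (reward-and-punish) equilibrium profile. -/
noncomputable def sigmaNE (G : MDSG P V A) : Profile V A := fun h v =>
  match devState G h with
  | none => mainA G v
  | some q => if G.owner v = q then mainA G v else punishA G q v

lemma sigmaNE_none {h : List (V × A)} (hdv : devState G h = none) (v : V) :
    sigmaNE G h v = mainA G v := by
  simp [sigmaNE, hdv]

lemma sigmaNE_some {h : List (V × A)} {q : P} (hdv : devState G h = some q)
    {v : V} (hv : G.owner v ≠ q) : sigmaNE G h v = punishA G q v := by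
  simp [sigmaNE, hdv, hv]

lemma devState_sigmaNE (v : V) (n : ℕ) :
    devState G (G.histState (sigmaNE G) v n).1 = none := by
  induction n with
  | zero => rfl
  | succ n ih =>
    rw [histState_succ_fst, devState_append, ih, sigmaNE_none G ih]
    simp [devStep]

lemma playA_sigmaNE (v : V) (n : ℕ) :
    G.playA (sigmaNE G) v n = mainA G (G.playV (sigmaNE G) v n) := by
  rw [playA_def, ← playV_def]
  exact sigmaNE_none G (devState_sigmaNE G v n) _

/-- Per-step inequality along the main path, for every player. -/
lemma main_step (p : P) (v : V) (n : ℕ) :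
    val G p (G.playV (sigmaNE G) v n)
      ≤ G.rew p (G.playV (sigmaNE G) v n) (G.playA (sigmaNE G) v n)
        + G.disc * val G p (G.playV (sigmaNE G) v (n+1)) := by
  rw [playV_succ, playA_sigmaNE]
  set x := G.playV (sigmaNE G) v n
  by_cases h : G.owner x = p
  · subst h
    exact le_of_eq (mainA_spec G x)
  · exact val_le_QQ G h _

/-- Any unilateral deviation of `p` from `sigmaNE` gives `p` at most the
reward of `sigmaNE`, from any start vertex. -/
lemma reward_le_sigmaNE (p : P) (σ' : Profile V A)
    (hd : G.DiffOnly (sigmaNE G) σ' p) (v : V) :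
    G.reward p σ' v ≤ G.reward p (sigmaNE G) v := by
  classical
  by_cases hall : ∀ i, G.playA σ' v i = G.playA (sigmaNE G) v i
  · apply le_of_eq
    apply tsum_congr
    intro i
    have hv : G.playV σ' v i = G.playV (sigmaNE G) v i := by
      rw [playV_def, playV_def,
        hist_agree G (sigmaNE G) σ' v i (fun j _ => hall j)]
    rw [hall i, hv]
  · push_neg at hall
    set n := Nat.find hall with hn_def
    have hn : G.playA σ' v n ≠ G.playA (sigmaNE G) v n := Nat.find_spec hall
    have hmin : ∀ i, i < n → G.playA σ' v i = G.playA (sigmaNE G) v i :=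
      fun i hi => not_not.mp (Nat.find_min hall hi)
    have hh : G.histState σ' v n = G.histState (sigmaNE G) v n :=
      hist_agree G (sigmaNE G) σ' v n hmin
    have hu' : G.playV σ' v n = G.playV (sigmaNE G) v n := by
      rw [playV_def, playV_def, hh]
    have howner : G.owner (G.playV (sigmaNE G) v n) = p := by
      by_contra hop
      apply hn
      rw [playA_def, playA_def, hh]
      exact hd (G.histState (sigmaNE G) v n).1 (G.histState (sigmaNE G) v n).2 hop
    have hstep : ∀ k, devState G (G.histState σ' v (n+1+k)).1 = some p := by
      intro k
      induction k with
      | zero =>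
        have hne : σ' (G.histState (sigmaNE G) v n).1 (G.histState (sigmaNE G) v n).2
            ≠ mainA G (G.histState (sigmaNE G) v n).2 := by
          intro heq
          apply hn
          rw [playA_def, playA_def, hh, heq]
          exact (sigmaNE_none G (devState_sigmaNE G v n) _).symm
        rw [show n+1+0 = n+1 from rfl, histState_succ_fst, hh, devState_append,
          devState_sigmaNE]
        simp only [devStep, if_neg hne]
        rw [← playV_def, howner]
      | succ k ih =>
        rw [show n+1+(k+1) = (n+1+k)+1 from rfl, histState_succ_fst, devState_append, ih]
        rfl
    have hkey : ∀ k, G.rew p (G.playV σ' v (n+k)) (G.playA σ' v (n+k))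
        + G.disc * val G p (G.playV σ' v (n+k+1)) ≤ val G p (G.playV σ' v (n+k)) := by
      intro k
      have hsucc : G.playV σ' v (n+k+1)
          = G.tr (G.playV σ' v (n+k)) (G.playA σ' v (n+k)) := rfl
      rw [hsucc]
      by_cases ho : G.owner (G.playV σ' v (n+k)) = p
      · exact QQ_le_val G ho _
      · have hk0 : k ≠ 0 := by
          intro hk
          subst hk
          rw [Nat.add_zero, hu', howner] at ho
          exact ho rfl
        obtain ⟨k', rfl⟩ := Nat.exists_eq_succ_of_ne_zero hk0
        have hdev : devState G (G.histState σ' v (n+(k'+1))).1 = some p := by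
          have h1 := hstep k'
          rwa [show n+1+k' = n+(k'+1) from by omega] at h1
        have hact : G.playA σ' v (n+(k'+1)) = punishA G p (G.playV σ' v (n+(k'+1))) := by
          rw [playA_def, ← playV_def]
          rw [hd _ _ ho]
          exact sigmaNE_some G hdev ho
        rw [hact]
        exact le_of_eq (punishA_spec G ho).symm
    have hT' : (∑' i, G.rew p (G.playV σ' v (n+i)) (G.playA σ' v (n+i)) * G.disc ^ i)
        ≤ val G p (G.playV (sigmaNE G) v n) := by
      have h1 := tsum_le_val G p (fun i => G.playV σ' v (n+i))
        (fun i => G.playA σ' v (n+i)) hkey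
      simp only [Nat.add_zero] at h1
      rwa [hu'] at h1
    have hT : val G p (G.playV (sigmaNE G) v n)
        ≤ ∑' i, G.rew p (G.playV (sigmaNE G) v (n+i)) (G.playA (sigmaNE G) v (n+i))
            * G.disc ^ i := by
      have h1 := val_le_tsum G p (fun i => G.playV (sigmaNE G) v (n+i))
        (fun i => G.playA (sigmaNE G) v (n+i)) (fun i => main_step G p v (n+i))
      simpa only [Nat.add_zero] using h1
    rw [reward_split G p σ' v n, reward_split G p (sigmaNE G) v n]
    have hS : ∑ i ∈ Finset.range n, G.rew p (G.playV σ' v i) (G.playA σ' v i) * G.disc ^ i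
        = ∑ i ∈ Finset.range n,
            G.rew p (G.playV (sigmaNE G) v i) (G.playA (sigmaNE G) v i) * G.disc ^ i := by
      apply Finset.sum_congr rfl
      intro i hi
      have hi' := Finset.mem_range.mp hi
      have hV : G.playV σ' v i = G.playV (sigmaNE G) v i := by
        rw [playV_def, playV_def,
          hist_agree G (sigmaNE G) σ' v i (fun j hj => hmin j (hj.trans hi'))]
      rw [hmin i hi', hV]
    rw [hS]
    have h2 := mul_le_mul_of_nonneg_right (hT'.trans hT) (pow_nonneg G.disc_pos.le n)
    linarith

lemma ER_le_sigmaNE (p : P) (σ' : Profile V A) (hd : G.DiffOnly (sigmaNE G) σ' p) :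
    G.ER p σ' ≤ G.ER p (sigmaNE G) := by
  unfold MDSG.ER
  refine Summable.tsum_le_tsum (fun v => ?_) (hasSum_fintype _).summable (hasSum_fintype _).summable
  exact mul_le_mul_of_nonneg_left (reward_le_sigmaNE G p σ' hd v) (G.init_nonneg v)

end Strategy

end MDSGNash

open MDSG in
/-- Every multi-player discounted sum game has a pure Nash equilibrium, and
hence, for any designated leader, a pure leader strategy profile. -/
theorem pure_Nash_exists {P V A : Type} (G : MDSG P V A) :
    (∃ σ : Profile V A, G.IsNash σ) ∧
    (∀ l : P, ∃ σ : Profile V A, G.IsLeaderSP l σ) := by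
  haveI := G.fin_P
  haveI := G.fin_V
  haveI := G.fin_A
  haveI := G.nonempty_A
  letI : Fintype V := Fintype.ofFinite V
  letI : Fintype A := Fintype.ofFinite A
  letI : DecidableEq P := Classical.decEq P
  letI : DecidableEq A := Classical.decEq A
  have key : G.IsNash (MDSGNash.sigmaNE G) :=
    fun p σ' hd => MDSGNash.ER_le_sigmaNE G p σ' hd
  exact ⟨⟨_, key⟩, fun l => ⟨_, fun p _ σ' hd => key p σ' hd⟩⟩
end
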